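/- Let μ be a nonnegative measure on ℝ^n, x a point, and for r > 0 with μ(B_r(x)) > 0 define ν_r := (∫_{B_r(x)} f dμ)/(μ(B_r(x))) for a vector-valued density f with |f| ≤ 1 μ-a.e. Then for 0 < s < r, |ν_r - ν_s| ≤ 2·[(μ(B_r(x)) - |∫_{B_r(x)} f dμ|)/μ(B_s(x))]^{1/2}. -/

import Mathlib

open MeasureTheory Metric
open scoped ENNReal RealInnerProductSpace

theorem stmt14 (n : ℕ) (μ : Measure (EuclideanSpace ℝ (Fin n)))
    (f : EuclideanSpace ℝ (Fin n) → EuclideanSpace ℝ (Fin n))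
    (x : EuclideanSpace ℝ (Fin n)) (s r : ℝ) (hs : 0 < s) (hsr : s < r)
    (hf : ∀ᵐ y ∂μ, ‖f y‖ ≤ 1)
    (hint : IntegrableOn f (ball x r) μ)
    (hμr : μ (ball x r) < ⊤)
    (hμs : 0 < μ (ball x s)) :
    ‖(μ (ball x r)).toReal⁻¹ • (∫ y in ball x r, f y ∂μ) -
        (μ (ball x s)).toReal⁻¹ • (∫ y in ball x s, f y ∂μ)‖ ≤
      2 * Real.sqrt
        (((μ (ball x r)).toReal - ‖∫ y in ball x r, f y ∂μ‖) /
          (μ (ball x s)).toReal) := by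
  have hsub : ball x s ⊆ ball x r := ball_subset_ball hsr.le
  have hμsr : μ (ball x s) ≤ μ (ball x r) := measure_mono hsub
  have hμs_top : μ (ball x s) < ⊤ := lt_of_le_of_lt hμsr hμr
  set Mr : ℝ := (μ (ball x r)).toReal with hMrdef
  set Ms : ℝ := (μ (ball x s)).toReal with hMsdef
  have hMs : 0 < Ms := ENNReal.toReal_pos hμs.ne' hμs_top.ne
  have hMsr : Ms ≤ Mr := ENNReal.toReal_mono hμr.ne hμsr
  have hMr : 0 < Mr := lt_of_lt_of_le hMs hMsr
  set Ir := ∫ y in ball x r, f y ∂μ with hIrdef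
  set Is := ∫ y in ball x s, f y ∂μ with hIsdef
  have hints : IntegrableOn f (ball x s) μ := hint.mono_set hsub
  have hnormint : ∀ (t : Set (EuclideanSpace ℝ (Fin n))), μ t < ⊤ → IntegrableOn f t μ →
      ‖∫ y in t, f y ∂μ‖ ≤ (μ t).toReal := by
    intro t ht hintt
    calc ‖∫ y in t, f y ∂μ‖ ≤ ∫ y in t, ‖f y‖ ∂μ := norm_integral_le_integral_norm _
      _ ≤ ∫ _ in t, (1:ℝ) ∂μ := by
          apply integral_mono_ae hintt.norm (integrableOn_const ht.ne)
          exact ae_restrict_of_ae hf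
      _ = (μ t).toReal := by simp [Measure.real]
  have hIr : ‖Ir‖ ≤ Mr := hnormint _ hμr hint
  have hIs : ‖Is‖ ≤ Ms := hnormint _ hμs_top hints
  set ν := Mr⁻¹ • Ir with hνdef
  set νs := Ms⁻¹ • Is with hνsdef
  have hν1 : ‖ν‖ ≤ 1 := by
    rw [hνdef, norm_smul, norm_inv, Real.norm_of_nonneg hMr.le,
      inv_mul_le_iff₀ hMr, mul_one]
    exact hIr
  have hνs1 : ‖νs‖ ≤ 1 := by
    rw [hνsdef, norm_smul, norm_inv, Real.norm_of_nonneg hMs.le,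
      inv_mul_le_iff₀ hMs, mul_one]
    exact hIs
  -- monotonicity of A ↦ μ A - ⟨ν, ∫_A f⟩
  have hmono : Ms - ⟪ν, Is⟫ ≤ Mr - ⟪ν, Ir⟫ := by
    have hInt1 : ∀ (t : Set (EuclideanSpace ℝ (Fin n))), μ t < ⊤ → IntegrableOn f t μ →
        IntegrableOn (fun y => 1 - ⟪ν, f y⟫) t μ := by
      intro t ht hintt
      exact (integrableOn_const ht.ne).sub (hintt.const_inner ν)
    have hpos : 0 ≤ᵐ[μ.restrict (ball x r)] fun y => 1 - ⟪ν, f y⟫ := by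
      filter_upwards [ae_restrict_of_ae hf] with y hy
      have h1 : ⟪ν, f y⟫ ≤ ‖ν‖ * ‖f y‖ := real_inner_le_norm _ _
      have h2 : ‖ν‖ * ‖f y‖ ≤ 1 := by
        calc ‖ν‖ * ‖f y‖ ≤ 1 * 1 :=
              mul_le_mul hν1 hy (norm_nonneg _) zero_le_one
          _ = 1 := by ring
      simp only [Pi.zero_apply]
      linarith
    have key : ∫ y in ball x s, (1 - ⟪ν, f y⟫) ∂μ ≤ ∫ y in ball x r, (1 - ⟪ν, f y⟫) ∂μ :=
      setIntegral_mono_set (hInt1 _ hμr hint) hpos (HasSubset.Subset.eventuallyLE hsub)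
    have comp : ∀ (t : Set (EuclideanSpace ℝ (Fin n))), μ t < ⊤ → IntegrableOn f t μ →
        ∫ y in t, (1 - ⟪ν, f y⟫) ∂μ = (μ t).toReal - ⟪ν, ∫ y in t, f y ∂μ⟫ := by
      intro t ht hintt
      rw [integral_sub (integrableOn_const (C := (1:ℝ)) ht.ne) (hintt.const_inner ν),
        integral_inner hintt]
      simp [Measure.real]
    rw [comp _ hμs_top hints, comp _ hμr hint] at key
    exact key
  have hνIr : ⟪ν, Ir⟫ = Mr⁻¹ * ‖Ir‖ ^ 2 := by
    rw [hνdef, real_inner_smul_left, real_inner_self_eq_norm_sq]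
  have hD : 0 ≤ Mr - ‖Ir‖ := by linarith
  have h2 : Mr - ⟪ν, Ir⟫ ≤ 2 * (Mr - ‖Ir‖) := by
    rw [hνIr]
    have hinv : Mr * Mr⁻¹ = 1 := mul_inv_cancel₀ hMr.ne'
    have hinvpos : 0 < Mr⁻¹ := inv_pos.2 hMr
    nlinarith [sq_nonneg (Mr - ‖Ir‖), norm_nonneg Ir]
  have hνIs : Ms - 2 * (Mr - ‖Ir‖) ≤ ⟪ν, Is⟫ := by linarith
  have hinner : 1 - 2 * ((Mr - ‖Ir‖) / Ms) ≤ ⟪ν, νs⟫ := by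
    rw [hνsdef, real_inner_smul_right]
    have : Ms⁻¹ * (Ms - 2 * (Mr - ‖Ir‖)) ≤ Ms⁻¹ * ⟪ν, Is⟫ :=
      mul_le_mul_of_nonneg_left hνIs (inv_nonneg.2 hMs.le)
    calc 1 - 2 * ((Mr - ‖Ir‖) / Ms) = Ms⁻¹ * (Ms - 2 * (Mr - ‖Ir‖)) := by
          field_simp
      _ ≤ Ms⁻¹ * ⟪ν, Is⟫ := this
  have hsq : ‖ν - νs‖ ^ 2 ≤ 4 * ((Mr - ‖Ir‖) / Ms) := by
    have hexp : ‖ν - νs‖ ^ 2 = ‖ν‖ ^ 2 - 2 * ⟪ν, νs⟫ + ‖νs‖ ^ 2 :=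
      norm_sub_sq_real ν νs
    nlinarith [norm_nonneg ν, norm_nonneg νs]
  have hq : 0 ≤ (Mr - ‖Ir‖) / Ms := div_nonneg hD hMs.le
  calc ‖ν - νs‖ = Real.sqrt (‖ν - νs‖ ^ 2) := (Real.sqrt_sq (norm_nonneg _)).symm
    _ ≤ Real.sqrt (4 * ((Mr - ‖Ir‖) / Ms)) := Real.sqrt_le_sqrt hsq
    _ = 2 * Real.sqrt ((Mr - ‖Ir‖) / Ms) := by
        rw [show (4:ℝ) = 2 ^ 2 by norm_num, Real.sqrt_mul (by positivity),
          Real.sqrt_sq (by norm_num : (0:ℝ) ≤ 2)]
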